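/- In L^∞(0,1), the characteristic function of [0,1/2] is not in the generalized orbit of the constant function 1; in particular L^∞(0,1) is not asymptotically transitive. -/
import Mathlib


open MeasureTheory
open scoped ENNReal NNReal

/-- The measure of `(0,1)` giving the space `L^∞(0,1)`. -/
noncomputable def mu01 : Measure ℝ := volume.restrict (Set.Ioo (0 : ℝ) 1)

instance : IsFiniteMeasure mu01 := by
  constructor
  simp only [mu01, Measure.restrict_apply_univ]
  simp [Real.volume_Ioo]

/-- The constant function `1` in `L^∞(0,1)`. -/
noncomputable def oneLinfty : Lp ℝ ⊤ mu01 :=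
  indicatorConstLp ⊤ MeasurableSet.univ
    (by
      simp only [mu01, Measure.restrict_apply_univ]
      simp) (1 : ℝ)

/-- The characteristic function of `[0, 1/2]` in `L^∞(0,1)`. -/
noncomputable def chiHalf : Lp ℝ ⊤ mu01 :=
  indicatorConstLp ⊤ measurableSet_Icc
    (by
      refine ne_top_of_le_ne_top (b := volume (Set.Icc (0:ℝ) (1/2))) ?_
        (Measure.restrict_apply_le _ _)
      simp [Real.volume_Icc]) (1 : ℝ)

/-- The characteristic function of `(1/2, 1]` in `L^∞(0,1)`. -/
noncomputable def chiRight : Lp ℝ ⊤ mu01 :=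
  indicatorConstLp ⊤ (measurableSet_Ioc : MeasurableSet (Set.Ioc (1/2 : ℝ) 1)) (measure_ne_top mu01 _) (1 : ℝ)

lemma mu01_Ioc_ne_zero : mu01 (Set.Ioc (1/2 : ℝ) 1) ≠ 0 := by
  have h1 : Set.Ioo (1/2 : ℝ) 1 ⊆ Set.Ioc (1/2 : ℝ) 1 := Set.Ioo_subset_Ioc_self
  have h2 : mu01 (Set.Ioo (1/2 : ℝ) 1) ≤ mu01 (Set.Ioc (1/2 : ℝ) 1) := measure_mono h1
  have h3 : mu01 (Set.Ioo (1/2 : ℝ) 1) = volume (Set.Ioo (1/2 : ℝ) 1) := by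
    rw [mu01, Measure.restrict_apply measurableSet_Ioo]
    congr 1
    rw [Set.inter_eq_left]
    intro x hx
    exact ⟨by linarith [hx.1], hx.2⟩
  rw [h3] at h2
  rw [Real.volume_Ioo] at h2
  intro h0
  rw [h0] at h2
  simp only [nonpos_iff_eq_zero, ENNReal.ofReal_eq_zero] at h2
  linarith

lemma norm_chiRight : ‖chiRight‖ = 1 := by
  rw [chiRight, norm_indicatorConstLp_top mu01_Ioc_ne_zero]
  simp

/-- a.e. pointwise bound by the `L^∞` norm. -/
lemma ae_norm_le_norm (f : Lp ℝ ⊤ mu01) : ∀ᵐ x ∂mu01, ‖f x‖ ≤ ‖f‖ := by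
  have h := ae_le_eLpNormEssSup (f := (f : ℝ → ℝ)) (μ := mu01)
  have hne : eLpNormEssSup (f : ℝ → ℝ) mu01 ≠ ⊤ := by
    have := Lp.eLpNorm_ne_top f
    rwa [eLpNorm_exponent_top] at this
  filter_upwards [h] with x hx
  have heq : ‖f x‖ = ((‖f x‖₊ : ℝ≥0∞)).toReal := by simp
  rw [heq, Lp.norm_def, eLpNorm_exponent_top]
  exact ENNReal.toReal_mono hne hx

/-- `L^∞` norm bound from an a.e. pointwise bound. -/
lemma norm_le_of_ae (f : Lp ℝ ⊤ mu01) {C : ℝ} (hC : 0 ≤ C)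
    (h : ∀ᵐ x ∂mu01, ‖f x‖ ≤ C) : ‖f‖ ≤ C := by
  have := Lp.norm_le_of_ae_bound hC h
  simpa using this

/-- `χ_{[0,1/2]}` is not in the generalized orbit of `𝟙` in `L^∞(0,1)`; in particular
`L^∞(0,1)` is not asymptotically transitive. -/
theorem stmt_3 :
    ¬ (∀ ε > (0 : ℝ), ∃ T : Lp ℝ ⊤ mu01 ≃L[ℝ] Lp ℝ ⊤ mu01,
        T oneLinfty = chiHalf ∧
        ‖(T : Lp ℝ ⊤ mu01 →L[ℝ] Lp ℝ ⊤ mu01)‖ ≤ 1 + ε ∧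
        ‖(T.symm : Lp ℝ ⊤ mu01 →L[ℝ] Lp ℝ ⊤ mu01)‖ ≤ 1 + ε) := by
  intro h
  obtain ⟨T, hT1, hTn, hTsn⟩ := h (1/2) (by norm_num)
  set y : Lp ℝ ⊤ mu01 := chiRight with hy
  set z : Lp ℝ ⊤ mu01 := T.symm y with hz
  have hTz : T z = y := T.apply_symm_apply y
  -- pointwise bounds on χ ± y
  have hchi : (chiHalf : ℝ → ℝ) =ᵐ[mu01] (Set.Icc (0:ℝ) (1/2)).indicator (fun _ => (1:ℝ)) :=
    indicatorConstLp_coeFn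
  have hyc : (y : ℝ → ℝ) =ᵐ[mu01] (Set.Ioc (1/2:ℝ) 1).indicator (fun _ => (1:ℝ)) :=
    indicatorConstLp_coeFn
  have hind : ∀ x : ℝ, ∀ s : ℝ, s = 1 ∨ s = -1 →
      ‖(Set.Icc (0:ℝ) (1/2)).indicator (fun _ => (1:ℝ)) x +
        s * (Set.Ioc (1/2:ℝ) 1).indicator (fun _ => (1:ℝ)) x‖ ≤ 1 := by
    intro x s hs
    by_cases h1 : x ∈ Set.Icc (0:ℝ) (1/2)
    · have h2 : x ∉ Set.Ioc (1/2:ℝ) 1 := fun h2 => absurd h1.2 (not_le.2 h2.1)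
      rw [Set.indicator_of_mem h1, Set.indicator_of_notMem h2]
      norm_num
    · rw [Set.indicator_of_notMem h1]
      by_cases h2 : x ∈ Set.Ioc (1/2:ℝ) 1
      · rw [Set.indicator_of_mem h2]
        rcases hs with hs | hs <;> rw [hs] <;> norm_num
      · rw [Set.indicator_of_notMem h2]
        norm_num
  have hsum : ‖chiHalf + y‖ ≤ 1 := by
    apply norm_le_of_ae _ zero_le_one
    filter_upwards [Lp.coeFn_add chiHalf y, hchi, hyc] with x h1 h2 h3
    rw [h1]
    simp only [Pi.add_apply]
    rw [h2, h3]
    have := hind x 1 (Or.inl rfl)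
    simpa using this
  have hdiff : ‖chiHalf - y‖ ≤ 1 := by
    apply norm_le_of_ae _ zero_le_one
    filter_upwards [Lp.coeFn_sub chiHalf y, hchi, hyc] with x h1 h2 h3
    rw [h1]
    simp only [Pi.sub_apply]
    rw [h2, h3]
    have := hind x (-1) (Or.inr rfl)
    simp only [neg_one_mul] at this
    simpa [sub_eq_add_neg] using this
  -- norms of 1 ± z are ≤ 3/2
  have hTa : T (oneLinfty + z) = chiHalf + y := by rw [map_add, hT1, hTz]
  have hTb : T (oneLinfty - z) = chiHalf - y := by rw [map_sub, hT1, hTz]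
  have ha : ‖oneLinfty + z‖ ≤ 3/2 := by
    have h1 : oneLinfty + z = T.symm (chiHalf + y) := by
      rw [← hTa, T.symm_apply_apply]
    rw [h1]
    calc ‖T.symm (chiHalf + y)‖
        ≤ ‖(T.symm : Lp ℝ ⊤ mu01 →L[ℝ] Lp ℝ ⊤ mu01)‖ * ‖chiHalf + y‖ :=
          (T.symm : Lp ℝ ⊤ mu01 →L[ℝ] Lp ℝ ⊤ mu01).le_opNorm _
      _ ≤ (1 + 1/2) * 1 := by
          apply mul_le_mul hTsn hsum (norm_nonneg _) (by norm_num)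
      _ = 3/2 := by norm_num
  have hb : ‖oneLinfty - z‖ ≤ 3/2 := by
    have h1 : oneLinfty - z = T.symm (chiHalf - y) := by
      rw [← hTb, T.symm_apply_apply]
    rw [h1]
    calc ‖T.symm (chiHalf - y)‖
        ≤ ‖(T.symm : Lp ℝ ⊤ mu01 →L[ℝ] Lp ℝ ⊤ mu01)‖ * ‖chiHalf - y‖ :=
          (T.symm : Lp ℝ ⊤ mu01 →L[ℝ] Lp ℝ ⊤ mu01).le_opNorm _
      _ ≤ (1 + 1/2) * 1 := by
          apply mul_le_mul hTsn hdiff (norm_nonneg _) (by norm_num)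
      _ = 3/2 := by norm_num
  -- lower bound on ‖z‖
  have hone : (oneLinfty : ℝ → ℝ) =ᵐ[mu01] fun _ => (1:ℝ) := by
    have := indicatorConstLp_coeFn (p := (⊤ : ℝ≥0∞)) (μ := mu01)
      (hs := MeasurableSet.univ (α := ℝ))
      (hμs := by simp only [mu01, Measure.restrict_apply_univ]; simp) (c := (1:ℝ))
    refine this.trans ?_
    filter_upwards with x
    simp
  have hzlb : (2:ℝ)/3 ≤ ‖z‖ := by
    have h1 : ‖y‖ ≤ ‖(T : Lp ℝ ⊤ mu01 →L[ℝ] Lp ℝ ⊤ mu01)‖ * ‖z‖ := by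
      rw [← hTz]; exact (T : Lp ℝ ⊤ mu01 →L[ℝ] Lp ℝ ⊤ mu01).le_opNorm z
    have h2 : ‖y‖ = 1 := norm_chiRight
    have h3 : ‖(T : Lp ℝ ⊤ mu01 →L[ℝ] Lp ℝ ⊤ mu01)‖ * ‖z‖ ≤ (3/2) * ‖z‖ := by
      apply mul_le_mul_of_nonneg_right _ (norm_nonneg z)
      linarith
    nlinarith [norm_nonneg z]
  -- upper bound on ‖z‖
  have hzub : ‖z‖ ≤ 1/2 := by
    apply norm_le_of_ae _ (by norm_num)
    filter_upwards [ae_norm_le_norm (oneLinfty + z), ae_norm_le_norm (oneLinfty - z),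
      Lp.coeFn_add oneLinfty z, Lp.coeFn_sub oneLinfty z, hone] with x h1 h2 h3 h4 h5
    rw [h3] at h1
    rw [h4] at h2
    simp only [Pi.add_apply, Pi.sub_apply, h5] at h1 h2
    have h1' : ‖1 + z x‖ ≤ 3/2 := le_trans h1 ha
    have h2' : ‖1 - z x‖ ≤ 3/2 := le_trans h2 hb
    rw [Real.norm_eq_abs, abs_le] at h1' h2' ⊢
    constructor <;> linarith [h1'.1, h1'.2, h2'.1, h2'.2]
  linarith
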